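/- (Strong duality) Under convexity and the Slater condition (∃ x̂ ∈ C ∩ dom F with G(x̂) ∈ −int S), if x̄ ∈ A is a weakly minimal solution of (VOP): WMin{F(x) : x ∈ C, G(x) ∈ −S}, then there exists T̄ ∈ L₊(S,K) such that (T̄, F(x̄)) is a weakly maximal solution of the dual problem WMax{y : (T,y) ∈ B}, where B = {(T,y) ∈ L₊(S,K) × Y : y ∉ (F + T∘G)(C ∩ dom G) + int K}; in particular the optimal values coincide: F(x̄) = ȳ. -/

import Mathlib

open Set Pointwise Topology

private lemma cone_add' {Y : Type*} [AddCommGroup Y] [Module ℝ Y] {K : Set Y}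
    (hconv : Convex ℝ K) (hcone : ∀ c : ℝ, 0 < c → c • K ⊆ K)
    {a b : Y} (ha : a ∈ K) (hb : b ∈ K) : a + b ∈ K := by
  have h : (1/2 : ℝ) • a + (1/2 : ℝ) • b ∈ K :=
    hconv ha hb (by norm_num) (by norm_num) (by norm_num)
  have h2 := hcone 2 (by norm_num) (smul_mem_smul_set (a := (2:ℝ)) h)
  have he : (2:ℝ) • ((1/2 : ℝ) • a + (1/2 : ℝ) • b) = a + b := by
    rw [smul_add, smul_smul, smul_smul]; norm_num
  rwa [he] at h2

private lemma interior_add_cone {Y : Type*} [AddCommGroup Y] [Module ℝ Y]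
    [TopologicalSpace Y] [IsTopologicalAddGroup Y] {K : Set Y}
    (hconv : Convex ℝ K) (hcone : ∀ c : ℝ, 0 < c → c • K ⊆ K)
    {k a : Y} (hk : k ∈ interior K) (ha : a ∈ K) : k + a ∈ interior K := by
  have hsub : (fun y => y + a) '' interior K ⊆ K := by
    rintro _ ⟨y, hy, rfl⟩
    exact cone_add' hconv hcone (interior_subset hy) ha
  have hopen : IsOpen ((fun y => y + a) '' interior K) :=
    (isOpenMap_add_right a) _ isOpen_interior
  exact interior_maximal hsub hopen ⟨k, hk, rfl⟩

set_option maxHeartbeats 1000000 in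
theorem stmt18 {X Y Z : Type*}
    [AddCommGroup X] [Module ℝ X] [TopologicalSpace X] [IsTopologicalAddGroup X]
    [ContinuousSMul ℝ X] [T2Space X] [LocallyConvexSpace ℝ X]
    [AddCommGroup Y] [Module ℝ Y] [TopologicalSpace Y] [IsTopologicalAddGroup Y]
    [ContinuousSMul ℝ Y] [T2Space Y] [LocallyConvexSpace ℝ Y]
    [AddCommGroup Z] [Module ℝ Z] [TopologicalSpace Z] [IsTopologicalAddGroup Z]
    [ContinuousSMul ℝ Z] [T2Space Z] [LocallyConvexSpace ℝ Z]
    (K : Set Y) (hKcl : IsClosed K) (hKconv : Convex ℝ K)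
    (hKcone : ∀ c : ℝ, 0 < c → c • K ⊆ K) (hK0 : (0:Y) ∈ K)
    (hKpointed : K ∩ (-K) ⊆ {0}) (hKint : (interior K).Nonempty)
    (S : Set Z) (hScl : IsClosed S) (hSconv : Convex ℝ S)
    (hScone : ∀ c : ℝ, 0 < c → c • S ⊆ S) (hS0 : (0:Z) ∈ S)
    (C : Set X) (hCne : C.Nonempty) (hCconv : Convex ℝ C)
    (F : X → Y) (domF : Set X) (hFprop : domF.Nonempty)
    (hFconv : Convex ℝ {p : X × Y | p.1 ∈ domF ∧ p.2 - F p.1 ∈ K})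
    (G : X → Z) (domG : Set X) (hGprop : domG.Nonempty)
    (hGconv : Convex ℝ {p : X × Z | p.1 ∈ domG ∧ p.2 - G p.1 ∈ S})
    (A : Set X) (hA : A = {x | x ∈ C ∧ x ∈ domG ∧ G x ∈ -S})
    (hAF : (A ∩ domF).Nonempty)
    (hslater : ∃ x' ∈ C ∩ domF, x' ∈ domG ∧ G x' ∈ -(interior S))
    (B : Set ((Z →L[ℝ] Y) × Y))
    (hB : B = {q : (Z →L[ℝ] Y) × Y | ⇑q.1 '' S ⊆ K ∧
      ∀ x, x ∈ C → x ∈ domG → x ∈ domF →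
        q.2 - (F x + q.1 (G x)) ∉ interior K})
    (xbar : X) (hxbarA : xbar ∈ A ∩ domF)
    (hsol : ¬ ∃ x, x ∈ C ∧ x ∈ domG ∧ G x ∈ -S ∧ x ∈ domF ∧
        F x - F xbar ∈ -(interior K)) :
    ∃ Tbar : Z →L[ℝ] Y, (Tbar, F xbar) ∈ B ∧
      F xbar ∉ ({y | ∃ T : Z →L[ℝ] Y, (T, y) ∈ B} - interior K) := by
  obtain ⟨hxbarA', hxbarF⟩ := hxbarA
  rw [hA] at hxbarA'
  obtain ⟨hxbarC, hxbarG, hxbarS⟩ := hxbarA'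
  obtain ⟨x', ⟨hx'C, hx'F⟩, hx'G, hx'S⟩ := hslater
  obtain ⟨k₀, hk₀⟩ := hKint
  -- the interior point of S
  set z₀ : Z := -G x' with hz₀
  have hz₀S : z₀ ∈ interior S := by
    rw [hz₀]; rwa [Set.mem_neg] at hx'S
  -- the two sets to separate
  set W : Set (Z × Y) := {p : Z × Y | ∃ x, x ∈ C ∧ x ∈ domF ∧ x ∈ domG ∧
      p.1 - G x ∈ S ∧ p.2 - (F x - F xbar) ∈ K} with hWdef
  set U : Set (Z × Y) := (-(interior S)) ×ˢ (-(interior K)) with hUdef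
  have hUopen : IsOpen U := ((isOpen_interior.neg).prod (isOpen_interior.neg))
  have hUconv : Convex ℝ U := ((hSconv.interior).neg).prod ((hKconv.interior).neg)
  have hWconv : Convex ℝ W := by
    rintro p ⟨x₁, hx₁C, hx₁F, hx₁G, hx₁S, hx₁K⟩ q ⟨x₂, hx₂C, hx₂F, hx₂G, hx₂S, hx₂K⟩
      a b ha hb hab
    refine ⟨a • x₁ + b • x₂, hCconv hx₁C hx₂C ha hb hab, ?_, ?_, ?_, ?_⟩
    · have m₁ : ((x₁, p.2 + F xbar) : X × Y) ∈ {p : X × Y | p.1 ∈ domF ∧ p.2 - F p.1 ∈ K} :=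
        ⟨hx₁F, by rwa [show p.2 + F xbar - F x₁ = p.2 - (F x₁ - F xbar) by abel]⟩
      have m₂ : ((x₂, q.2 + F xbar) : X × Y) ∈ {p : X × Y | p.1 ∈ domF ∧ p.2 - F p.1 ∈ K} :=
        ⟨hx₂F, by rwa [show q.2 + F xbar - F x₂ = q.2 - (F x₂ - F xbar) by abel]⟩
      exact (hFconv m₁ m₂ ha hb hab).1
    · have m₁ : ((x₁, p.1) : X × Z) ∈ {p : X × Z | p.1 ∈ domG ∧ p.2 - G p.1 ∈ S} :=
        ⟨hx₁G, hx₁S⟩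
      have m₂ : ((x₂, q.1) : X × Z) ∈ {p : X × Z | p.1 ∈ domG ∧ p.2 - G p.1 ∈ S} :=
        ⟨hx₂G, hx₂S⟩
      exact (hGconv m₁ m₂ ha hb hab).1
    · have m₁ : ((x₁, p.1) : X × Z) ∈ {p : X × Z | p.1 ∈ domG ∧ p.2 - G p.1 ∈ S} :=
        ⟨hx₁G, hx₁S⟩
      have m₂ : ((x₂, q.1) : X × Z) ∈ {p : X × Z | p.1 ∈ domG ∧ p.2 - G p.1 ∈ S} :=
        ⟨hx₂G, hx₂S⟩
      have := (hGconv m₁ m₂ ha hb hab).2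
      simpa using this
    · have m₁ : ((x₁, p.2 + F xbar) : X × Y) ∈ {p : X × Y | p.1 ∈ domF ∧ p.2 - F p.1 ∈ K} :=
        ⟨hx₁F, by rwa [show p.2 + F xbar - F x₁ = p.2 - (F x₁ - F xbar) by abel]⟩
      have m₂ : ((x₂, q.2 + F xbar) : X × Y) ∈ {p : X × Y | p.1 ∈ domF ∧ p.2 - F p.1 ∈ K} :=
        ⟨hx₂F, by rwa [show q.2 + F xbar - F x₂ = q.2 - (F x₂ - F xbar) by abel]⟩
      have h2 := (hFconv m₁ m₂ ha hb hab).2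
      simp only [Prod.smul_mk, Prod.mk_add_mk] at h2
      have heq : a • (p.2 + F xbar) + b • (q.2 + F xbar)
          = (a • p.2 + b • q.2) + (a + b) • F xbar := by module
      rw [heq, hab, one_smul] at h2
      have heq2 : a • p.2 + b • q.2 + F xbar - F ((a • x₁ + b • x₂))
          = (a • p, b • q).1.2 + (a • p, b • q).2.2 -
            (F (a • x₁ + b • x₂) - F xbar) := by simp; abel
      rw [heq2] at h2
      simpa using h2
  have hdisj : Disjoint U W := by
    rw [Set.disjoint_left]
    rintro p ⟨hp1, hp2⟩ ⟨x, hxC, hxF, hxG, hxS, hxK⟩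
    rw [Set.mem_neg] at hp1 hp2
    have hGx : -G x ∈ interior S := by
      have := interior_add_cone hSconv hScone hp1 hxS
      rwa [show -p.1 + (p.1 - G x) = -G x by abel] at this
    have hFx : -(F x - F xbar) ∈ interior K := by
      have := interior_add_cone hKconv hKcone hp2 hxK
      rwa [show -p.2 + (p.2 - (F x - F xbar)) = -(F x - F xbar) by abel] at this
    exact hsol ⟨x, hxC, hxG, by rw [Set.mem_neg]; exact interior_subset hGx, hxF,
      by rw [Set.mem_neg]; exact hFx⟩
  obtain ⟨f, c, hfU, hfW⟩ := geometric_hahn_banach_open hUconv hUopen hWconv hdisj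
  set f₁ : Z →L[ℝ] ℝ := f.comp (ContinuousLinearMap.inl ℝ Z Y) with hf₁
  set f₂ : Y →L[ℝ] ℝ := f.comp (ContinuousLinearMap.inr ℝ Z Y) with hf₂
  have hsplit : ∀ (z : Z) (y : Y), f (z, y) = f₁ z + f₂ y := by
    intro z y
    rw [hf₁, hf₂]
    simp only [ContinuousLinearMap.comp_apply, ContinuousLinearMap.inl_apply,
      ContinuousLinearMap.inr_apply, ← map_add]
    congr 1
    simp
  -- f ≤ c on -S × -K
  have hfneg : ∀ p : Z × Y, p.1 ∈ -S → p.2 ∈ -K → f p ≤ c := by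
    rintro p hp1 hp2
    have hq : ((-z₀, -k₀) : Z × Y) ∈ U :=
      ⟨Set.neg_mem_neg.mpr hz₀S, Set.neg_mem_neg.mpr hk₀⟩
    have hfq : f (-z₀, -k₀) < c := hfU _ hq
    by_contra hcon
    push_neg at hcon
    set t : ℝ := (c - f (-z₀, -k₀)) / (f p - f (-z₀, -k₀)) with ht
    have hd : 0 < f p - f (-z₀, -k₀) := by linarith
    have ht0 : 0 < t := div_pos (by linarith) hd
    have ht1 : t < 1 := (div_lt_one hd).mpr (by linarith)
    -- the combination point is in U
    have hmem : ((1 - t) • (-z₀) + t • p.1 ∈ -(interior S)) := by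
      rw [Set.mem_neg, show -((1 - t) • (-z₀) + t • p.1) = (1 - t) • z₀ + t • (-p.1) by module]
      exact hSconv.combo_interior_self_mem_interior hz₀S (Set.mem_neg.mp hp1)
        (by linarith) ht0.le (by ring)
    have hmem2 : ((1 - t) • (-k₀) + t • p.2 ∈ -(interior K)) := by
      rw [Set.mem_neg, show -((1 - t) • (-k₀) + t • p.2) = (1 - t) • k₀ + t • (-p.2) by module]
      exact hKconv.combo_interior_self_mem_interior hk₀ (Set.mem_neg.mp hp2)
        (by linarith) ht0.le (by ring)
    have hlt : f ((1 - t) • ((-z₀, -k₀) : Z × Y) + t • p) < c := by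
      apply hfU
      exact ⟨hmem, hmem2⟩
    rw [map_add, map_smul, map_smul, smul_eq_mul, smul_eq_mul] at hlt
    have : (1 - t) * f (-z₀, -k₀) + t * f p = c := by
      rw [ht]; field_simp; ring
    linarith
  have hc0 : 0 ≤ c := by
    have := hfneg (0, 0) (by simpa using hS0) (by simpa using hK0)
    rwa [show ((0:Z), (0:Y)) = 0 from rfl, map_zero] at this
  -- f₁ ≥ 0 on S
  have hf₁S : ∀ s ∈ S, 0 ≤ f₁ s := by
    intro s hs
    by_contra hcon
    push_neg at hcon
    set t : ℝ := (c + 1) / (-f₁ s) with htdef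
    have ht0 : 0 < t := div_pos (by linarith) (by linarith)
    have hts : t • s ∈ S := hScone t ht0 (smul_mem_smul_set hs)
    have := hfneg (-(t • s), 0) (Set.neg_mem_neg.mpr hts) (by simpa using hK0)
    rw [hsplit, map_neg, map_smul, map_zero, smul_eq_mul] at this
    have hle : -(t * f₁ s) ≤ c := by linarith
    rw [htdef] at hle
    have hne : f₁ s ≠ 0 := ne_of_lt hcon
    rw [show -((c + 1) / (-f₁ s) * f₁ s) = c + 1 by field_simp] at hle
    linarith
  -- f₂ ≥ 0 on K
  have hf₂K : ∀ k ∈ K, 0 ≤ f₂ k := by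
    intro k hk
    by_contra hcon
    push_neg at hcon
    set t : ℝ := (c + 1) / (-f₂ k) with htdef
    have ht0 : 0 < t := div_pos (by linarith) (by linarith)
    have hts : t • k ∈ K := hKcone t ht0 (smul_mem_smul_set hk)
    have := hfneg (0, -(t • k)) (by simpa using hS0) (Set.neg_mem_neg.mpr hts)
    rw [hsplit, map_neg, map_smul, map_zero, smul_eq_mul] at this
    have hle : -(t * f₂ k) ≤ c := by linarith
    rw [htdef] at hle
    have hne : f₂ k ≠ 0 := ne_of_lt hcon
    rw [show -((c + 1) / (-f₂ k) * f₂ k) = c + 1 by field_simp] at hle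
    linarith
  -- lower bound on W
  have hW : ∀ x, x ∈ C → x ∈ domF → x ∈ domG → c ≤ f₁ (G x) + f₂ (F x - F xbar) := by
    intro x hxC hxF hxG
    have hmem : ((G x, F x - F xbar) : Z × Y) ∈ W :=
      ⟨x, hxC, hxF, hxG, by simpa using hS0, by simpa using hK0⟩
    have := hfW _ hmem
    rwa [hsplit] at this
  -- f₂ is positive on the interior of K
  have hf₂pos : ∀ k ∈ interior K, 0 < f₂ k := by
    intro k hk
    rcases lt_or_eq_of_le (hf₂K k (interior_subset hk)) with h | h
    · exact h
    exfalso
    -- f₂ vanishes identically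
    have hzero : ∀ v : Y, f₂ v = 0 := by
      have key : ∀ v : Y, 0 ≤ f₂ v := by
        intro v
        have hcont : Continuous fun t : ℝ => k + t • v :=
          continuous_const.add (continuous_id.smul continuous_const)
        have h1 : Filter.Tendsto (fun t : ℝ => k + t • v) (nhds (0:ℝ)) (nhds k) := by
          have := hcont.tendsto (0:ℝ)
          simpa using this
        have htend : Filter.Tendsto (fun t : ℝ => k + t • v)
            (nhdsWithin (0:ℝ) (Set.Ioi (0:ℝ))) (nhds k) := h1.mono_left nhdsWithin_le_nhds
        have hev : ∀ᶠ t in nhdsWithin (0:ℝ) (Set.Ioi (0:ℝ)), k + t • v ∈ interior K :=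
          htend.eventually (isOpen_interior.mem_nhds hk)
        have hev2 : ∀ᶠ t in nhdsWithin (0:ℝ) (Set.Ioi (0:ℝ)), t ∈ Set.Ioi (0:ℝ) :=
          eventually_mem_nhdsWithin
        obtain ⟨t, hmem, ht0'⟩ := (hev.and hev2).exists
        have ht0 : (0:ℝ) < t := ht0'
        have := hf₂K _ (interior_subset hmem)
        rw [map_add, map_smul, smul_eq_mul, ← h] at this
        nlinarith
      intro v
      have h1 := key v
      have h2 := key (-v)
      rw [map_neg] at h2
      linarith
    -- contradiction via Slater
    have hlow := hW x' hx'C hx'F hx'G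
    rw [hzero] at hlow
    have hstrict : f (G x', -k₀) < c :=
      hfU _ ⟨hx'S, Set.neg_mem_neg.mpr hk₀⟩
    rw [hsplit, map_neg, hzero] at hstrict
    linarith
  set γ : ℝ := f₂ k₀ with hγdef
  have hγ : 0 < γ := hf₂pos k₀ hk₀
  set Tbar : Z →L[ℝ] Y := (γ⁻¹ • f₁).smulRight k₀ with hTbar
  have hTapp : ∀ z, Tbar z = (γ⁻¹ * f₁ z) • k₀ := by
    intro z
    rw [hTbar]
    simp [ContinuousLinearMap.smulRight_apply, smul_eq_mul]
  have hTimg : ⇑Tbar '' S ⊆ K := by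
    rintro _ ⟨s, hs, rfl⟩
    rw [hTapp]
    have ht : 0 ≤ γ⁻¹ * f₁ s := mul_nonneg (by positivity) (hf₁S s hs)
    rcases lt_or_eq_of_le ht with h | h
    · exact hKcone _ h (smul_mem_smul_set (interior_subset hk₀))
    · rw [← h, zero_smul]; exact hK0
  refine ⟨Tbar, ?_, ?_⟩
  · rw [hB]
    refine ⟨hTimg, ?_⟩
    intro x hxC hxG hxF hcon
    have hpos := hf₂pos _ hcon
    rw [hTapp] at hpos
    rw [map_sub, map_add, map_smul, smul_eq_mul] at hpos
    have hWx := hW x hxC hxF hxG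
    rw [map_sub] at hWx
    have hγγ : γ⁻¹ * γ = 1 := inv_mul_cancel₀ hγ.ne'
    have : γ⁻¹ * f₁ (G x) * f₂ k₀ = f₁ (G x) := by
      rw [← hγdef]; field_simp
    nlinarith [this]
  · intro hmem
    rw [Set.mem_sub] at hmem
    obtain ⟨y, hy, k, hk, hyk⟩ := hmem
    obtain ⟨T, hT⟩ := hy
    rw [hB] at hT
    obtain ⟨hTimg', hTcond⟩ := hT
    have hGbar : -G xbar ∈ S := by rwa [Set.mem_neg] at hxbarS
    have hTK : T (-G xbar) ∈ K := hTimg' ⟨-G xbar, hGbar, rfl⟩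
    rw [map_neg] at hTK
    have : y - (F xbar + T (G xbar)) ∈ interior K := by
      have heq : y - (F xbar + T (G xbar)) = k + -(T (G xbar)) := by
        rw [← hyk]; abel
      rw [heq]
      exact interior_add_cone hKconv hKcone hk hTK
    exact hTcond xbar hxbarC hxbarG hxbarF this
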